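/- Let A be a compliant Banach algebra and let □ denote the first Arens product on the bidual A″. Then the image of A in A″ is a two-sided ideal of (A″, □). -/

import Mathlib

open MultiplierAlgebra

variable {A : Type*} [NonUnitalNormedRing A] [NormedSpace ℂ A]
  [SMulCommClass ℂ A A] [IsScalarTower ℂ A A] [CompleteSpace A]

/-- The map `f ↦ (a ↦ f · a)` where `(f · a)(b) = f (a * b)`, bundled as a continuous linear
map `A′ → (A →L A′)`. -/
noncomputable def fDot (A : Type*) [NonUnitalNormedRing A] [NormedSpace ℂ A]
    [SMulCommClass ℂ A A] [IsScalarTower ℂ A A] :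
    StrongDual ℂ A →L[ℂ] (A →L[ℂ] StrongDual ℂ A) :=
  (((ContinuousLinearMap.compL ℂ A (A →L[ℂ] A) (A →L[ℂ] ℂ)).flip
      (ContinuousLinearMap.mul ℂ A)).comp
    (ContinuousLinearMap.compL ℂ A A ℂ))

/-- The first Arens product on the bidual `A″`:
`(Φ □ Ψ)(f) = Φ(Ψ · f)` where `(Ψ · f)(a) = Ψ(f · a)` and `(f · a)(b) = f (a b)`. -/
noncomputable def arensMul (A : Type*) [NonUnitalNormedRing A] [NormedSpace ℂ A]
    [SMulCommClass ℂ A A] [IsScalarTower ℂ A A]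
    (Φ Ψ : StrongDual ℂ (StrongDual ℂ A)) :
    StrongDual ℂ (StrongDual ℂ A) :=
  Φ.comp ((ContinuousLinearMap.compL ℂ A (StrongDual ℂ A) ℂ Ψ).comp (fDot A))

section Auxiliary

/-- A function continuous for the topology induced by `e` factors through any
right inverse of `e`. -/
theorem aux_cont_factor {α β γ : Type*} [t : TopologicalSpace β] [TopologicalSpace γ]
    (e : α → β) (einv : β → α) (he : ∀ b, e (einv b) = b) (F : α → γ)
    (hF : @Continuous _ _ (TopologicalSpace.induced e t) _ F) :
    Continuous fun b => F (einv b) := by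
  letI : TopologicalSpace α := TopologicalSpace.induced e t
  have h1 : Continuous einv := by
    rw [continuous_induced_rng]
    have h2 : e ∘ einv = id := funext he
    rw [h2]
    exact continuous_id
  exact hF.comp h1

/-- A weak-*-continuous linear functional on the dual of a normed space `X` is evaluation
at some point of `X`. -/
theorem aux_weakDual_exists_rep {X : Type*} [NormedAddCommGroup X] [NormedSpace ℂ X]
    (g : StrongDual ℂ X →ₗ[ℂ] ℂ)
    (hg : Continuous fun w : WeakDual ℂ X => g (WeakDual.toStrongDual w)) :
    ∃ x : X, ∀ x' : StrongDual ℂ X, g x' = x' x := by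
  classical
  set B := topDualPairing ℂ X with hB
  have hp := B.weakBilin_withSeminorms
  let g' : WeakDual ℂ X →ₗ[ℂ] ℂ :=
    g.comp (WeakDual.toStrongDual (𝕜 := ℂ) (E := X)).toLinearMap
  have hq : Continuous ⇑(g'.toSeminorm) := by
    rw [LinearMap.coe_toSeminorm]
    exact hg.norm
  obtain ⟨s, C, hC, hle⟩ := Seminorm.bound_of_continuous hp g'.toSeminorm hq
  have hker : (⨅ i : s, LinearMap.ker (B.flip (i : X))) ≤ LinearMap.ker g := by
    intro x' hx'
    rw [Submodule.mem_iInf] at hx'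
    have h0 : ∀ i ∈ s, B.toSeminormFamily i (StrongDual.toWeakDual x') ≤ 0 := by
      intro i hi
      have h := hx' ⟨i, hi⟩
      rw [LinearMap.mem_ker] at h
      change ‖B (StrongDual.toWeakDual x') i‖ ≤ 0
      have hz : B (StrongDual.toWeakDual x') i = (0 : ℂ) := h
      rw [hz, norm_zero]
    have hsup : (s.sup B.toSeminormFamily) (StrongDual.toWeakDual x') ≤ 0 :=
      Seminorm.finset_sup_apply_le le_rfl h0
    have hle' := hle (StrongDual.toWeakDual x')
    rw [LinearMap.mem_ker, ← norm_eq_zero]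
    have hq0 : g'.toSeminorm (StrongDual.toWeakDual x') ≤ 0 := by
      refine hle'.trans ?_
      calc (C • s.sup B.toSeminormFamily) (StrongDual.toWeakDual x')
          = (C : ℝ) * (s.sup B.toSeminormFamily) (StrongDual.toWeakDual x') := rfl
        _ ≤ (C : ℝ) * 0 := mul_le_mul_of_nonneg_left hsup (by positivity)
        _ = 0 := by ring
    have hg0 : ‖g x'‖ ≤ 0 := hq0
    exact le_antisymm hg0 (norm_nonneg _)
  have hmem := mem_span_of_iInf_ker_le_ker (ι := s)
    (L := fun i : s => B.flip (i : X)) (K := g) hker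
  have hsub : Submodule.span ℂ (Set.range fun i : s => B.flip (i : X)) ≤
      LinearMap.range B.flip :=
    Submodule.span_le.mpr (Set.range_subset_iff.mpr fun i => ⟨(i : X), rfl⟩)
  obtain ⟨x, hx⟩ := hsub hmem
  exact ⟨x, fun x' => by rw [← hx]; rfl⟩

variable {A : Type*} [NonUnitalNormedRing A] [NormedSpace ℂ A]
  [SMulCommClass ℂ A A] [IsScalarTower ℂ A A]

/-- The canonical embedding of `A` into its multiplier algebra, as a continuous linear map. -/
noncomputable def auxEmbMul (A : Type*) [NonUnitalNormedRing A] [NormedSpace ℂ A]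
    [SMulCommClass ℂ A A] [IsScalarTower ℂ A A] : A →L[ℂ] 𝓜(ℂ, A) :=
  LinearMap.mkContinuous
    { toFun := DoubleCentralizer.coe ℂ
      map_add' := fun x y => DoubleCentralizer.ext _ _ _ _
        (Prod.ext (by simp [map_add]) (by simp [map_add]))
      map_smul' := fun c x => DoubleCentralizer.ext _ _ _ _
        (Prod.ext (by simp [map_smul]) (by simp [map_smul])) }
    1 (fun b => by
      rw [one_mul]
      change ‖(DoubleCentralizer.coe ℂ b : 𝓜(ℂ, A))‖ ≤ ‖b‖
      rw [DoubleCentralizer.norm_def]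
      refine (Prod.norm_def _).le.trans (max_le ?_ ?_)
      · exact ContinuousLinearMap.opNorm_mul_apply_le ℂ A b
      · refine ContinuousLinearMap.opNorm_le_bound _ (norm_nonneg b) fun x => ?_
        calc ‖((ContinuousLinearMap.mul ℂ A).flip b) x‖ = ‖x * b‖ := rfl
          _ ≤ ‖x‖ * ‖b‖ := norm_mul_le x b
          _ = ‖b‖ * ‖x‖ := mul_comm _ _)

/-- Key step: if `s : 𝓜(ℂ, A) →ₗ[ℂ] A` is weak*-to-weak continuous (through the
identification `Φ`), then pairing `Ψ` with any functional of the form `b' ↦ f (s b')` is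
represented by an element of `A`. -/
theorem aux_key_rep {X : Type*} [NormedAddCommGroup X] [NormedSpace ℂ X]
    (Φ : 𝓜(ℂ, A) ≃L[ℂ] StrongDual ℂ X)
    (s : 𝓜(ℂ, A) →ₗ[ℂ] A)
    (hs : ∀ f : StrongDual ℂ A,
      Continuous fun w : WeakDual ℂ X => f (s (Φ.symm (WeakDual.toStrongDual w))))
    (Ψ : StrongDual ℂ (StrongDual ℂ A)) :
    ∃ b : A, ∀ (f F : StrongDual ℂ A),
      (∀ b' : A, F b' = f (s (DoubleCentralizer.coe ℂ b'))) → Ψ F = f b := by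
  classical
  let Bmap : X →L[ℂ] StrongDual ℂ A :=
    ((Φ.toContinuousLinearMap.comp (auxEmbMul A)).flip)
  refine ⟨s (Φ.symm (Ψ.comp Bmap)), ?_⟩
  intro f F hF
  let g : StrongDual ℂ X →ₗ[ℂ] ℂ :=
    (f : A →ₗ[ℂ] ℂ).comp (s.comp (Φ.symm : StrongDual ℂ X →ₗ[ℂ] 𝓜(ℂ, A)))
  obtain ⟨x, hx⟩ := aux_weakDual_exists_rep g (hs f)
  have hF' : F = Bmap x := by
    ext b'
    have h1 := hx (Φ (auxEmbMul A b'))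
    have h2 : g (Φ (auxEmbMul A b')) = f (s (DoubleCentralizer.coe ℂ b')) := by
      show f (s (Φ.symm (Φ (auxEmbMul A b')))) = _
      rw [Φ.symm_apply_apply]
      rfl
    rw [hF b', ← h2, h1]
    rfl
  rw [hF']
  exact (hx (Ψ.comp Bmap)).symm

/-- Evaluation of the second component (right multiplication) at `a`, as a linear map. -/
noncomputable def auxSndEval (a : A) : 𝓜(ℂ, A) →ₗ[ℂ] A where
  toFun μ := μ.snd a
  map_add' _ _ := rfl
  map_smul' _ _ := rfl

/-- Evaluation of the first component (left multiplication) at `a`, as a linear map. -/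
noncomputable def auxFstEval (a : A) : 𝓜(ℂ, A) →ₗ[ℂ] A where
  toFun μ := μ.fst a
  map_add' _ _ := rfl
  map_smul' _ _ := rfl

end Auxiliary

/-- Let `A` be a compliant Banach algebra (faithful, `M(A) = 𝓜(ℂ, A)` a dual
Banach algebra, and for each `a ∈ A` the maps `μ ↦ μa` and `μ ↦ aμ` from `M(A)` to `A`
weak*-to-weak continuous). Then the canonical image of `A` in its bidual `A″` is a two-sided
ideal for the first Arens product. -/
theorem compliant_image_ideal_in_bidual
    (hfaith : ∀ x : A, ((∀ a : A, a * x = 0) → x = 0) ∧ ((∀ a : A, x * a = 0) → x = 0))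
    (X : Type*) [NormedAddCommGroup X] [NormedSpace ℂ X]
    (Φ : 𝓜(ℂ, A) ≃L[ℂ] StrongDual ℂ X)
    (τ : TopologicalSpace 𝓜(ℂ, A))
    (hτ : τ = TopologicalSpace.induced
      (fun m => StrongDual.toWeakDual (Φ m)) inferInstance)
    (hsep : ∀ m : 𝓜(ℂ, A), @Continuous _ _ τ τ (fun x => m * x) ∧
      @Continuous _ _ τ τ (fun x => x * m))
    (hcompl : ∀ (a : A) (f : StrongDual ℂ A),
      @Continuous _ _ τ _ (fun μ : 𝓜(ℂ, A) => f (μ.snd a)) ∧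
      @Continuous _ _ τ _ (fun μ : 𝓜(ℂ, A) => f (μ.fst a))) :
    ∀ (a : A) (Ψ : StrongDual ℂ (StrongDual ℂ A)),
      (∃ b : A, arensMul A (NormedSpace.inclusionInDoubleDual ℂ A a) Ψ =
        NormedSpace.inclusionInDoubleDual ℂ A b) ∧
      (∃ b : A, arensMul A Ψ (NormedSpace.inclusionInDoubleDual ℂ A a) =
        NormedSpace.inclusionInDoubleDual ℂ A b) := by
  subst hτ
  intro a Ψ
  have hinv : ∀ w : WeakDual ℂ X,
      StrongDual.toWeakDual (Φ (Φ.symm (WeakDual.toStrongDual w))) = w := by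
    intro w
    rw [Φ.apply_symm_apply]
    rfl
  constructor
  · -- left: (ι a) □ Ψ ∈ ι(A)
    have hs : ∀ f : StrongDual ℂ A,
        Continuous fun w : WeakDual ℂ X =>
          f (auxSndEval a (Φ.symm (WeakDual.toStrongDual w))) := by
      intro f
      exact aux_cont_factor (fun m : 𝓜(ℂ, A) => StrongDual.toWeakDual (Φ m))
        (fun w => Φ.symm (WeakDual.toStrongDual w)) hinv
        (fun μ => f (μ.snd a)) (hcompl a f).1
    obtain ⟨b, hb⟩ := aux_key_rep Φ (auxSndEval a) hs Ψ
    refine ⟨b, ContinuousLinearMap.ext fun f => ?_⟩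
    exact hb f (fDot A f a) (fun b' => rfl)
  · -- right: Ψ □ (ι a) ∈ ι(A)
    have hs : ∀ f : StrongDual ℂ A,
        Continuous fun w : WeakDual ℂ X =>
          f (auxFstEval a (Φ.symm (WeakDual.toStrongDual w))) := by
      intro f
      exact aux_cont_factor (fun m : 𝓜(ℂ, A) => StrongDual.toWeakDual (Φ m))
        (fun w => Φ.symm (WeakDual.toStrongDual w)) hinv
        (fun μ => f (μ.fst a)) (hcompl a f).2
    obtain ⟨b, hb⟩ := aux_key_rep Φ (auxFstEval a) hs Ψ
    refine ⟨b, ContinuousLinearMap.ext fun f => ?_⟩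
    exact hb f ((NormedSpace.inclusionInDoubleDual ℂ A a).comp (fDot A f)) (fun b' => rfl)
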